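/- For P, Q ∈ Γ_n with 0 < r ≤ p_i/q_i ≤ R for all i, the relative J-divergence D(P||Q) = ∑(p_i - q_i)ln((p_i+q_i)/(2q_i)) satisfies (2r(r+3)/(r+1))·I(P||Q) ≤ D(P||Q) ≤ (2R(R+3)/(R+1))·I(P||Q), where I(P||Q) = (1/2)∑[p_i ln(2p_i/(p_i+q_i)) + q_i ln(2q_i/(p_i+q_i))] is the Jensen-Shannon divergence. -/

import Mathlib

open Finset Real

noncomputable def Fc (c t : ℝ) : ℝ :=
  (t-1)*(Real.log (t+1) - Real.log 2) -
    c/2*(t*(Real.log 2 + Real.log t - Real.log (t+1)) + (Real.log 2 - Real.log (t+1)))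

noncomputable def Fd (c t : ℝ) : ℝ :=
  (Real.log (t+1) - Real.log 2) + (t-1)/(t+1) -
    c/2*(Real.log 2 + Real.log t - Real.log (t+1))

lemma hasDerivAt_log1 (t : ℝ) (ht : 0 < t) :
    HasDerivAt (fun x : ℝ => Real.log (x+1)) (1/(t+1)) t := by
  have h := (Real.hasDerivAt_log (by linarith : t+1 ≠ 0)).comp t
    ((hasDerivAt_id t).add_const 1)
  simpa [one_div, Function.comp_def] using h

lemma hasDerivAt_Fc (c t : ℝ) (ht : 0 < t) : HasDerivAt (Fc c) (Fd c t) t := by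
  have h1 := hasDerivAt_log1 t ht
  have h2 : HasDerivAt Real.log t⁻¹ t := Real.hasDerivAt_log (ne_of_gt ht)
  have hA : HasDerivAt (fun x : ℝ => (x-1)*(Real.log (x+1) - Real.log 2))
      (1*(Real.log (t+1) - Real.log 2) + (t-1)*(1/(t+1))) t :=
    ((hasDerivAt_id t).sub_const 1).mul (h1.sub_const (Real.log 2))
  have hB : HasDerivAt (fun x : ℝ => x*(Real.log 2 + Real.log x - Real.log (x+1)))
      (1*(Real.log 2 + Real.log t - Real.log (t+1)) + t*(0 + t⁻¹ - 1/(t+1))) t :=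
    (hasDerivAt_id t).mul (((hasDerivAt_const t (Real.log 2)).add h2).sub h1)
  have hC : HasDerivAt (fun x : ℝ => Real.log 2 - Real.log (x+1)) (0 - 1/(t+1)) t :=
    (hasDerivAt_const t (Real.log 2)).sub h1
  have h := hA.sub (((hB.add hC)).const_mul (c/2))
  refine h.congr_deriv ?_
  unfold Fd
  have ht1 : t + 1 ≠ 0 := by linarith
  field_simp
  ring

lemma hasDerivAt_Fd (c t : ℝ) (ht : 0 < t) :
    HasDerivAt (Fd c) ((t+3)/(t+1)^2 - c/2*(1/t - 1/(t+1))) t := by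
  have h1 := hasDerivAt_log1 t ht
  have h2 : HasDerivAt Real.log t⁻¹ t := Real.hasDerivAt_log (ne_of_gt ht)
  have ht1 : (t:ℝ) + 1 ≠ 0 := by linarith
  have hq : HasDerivAt (fun x : ℝ => (x-1)/(x+1))
      ((1*(t+1) - (t-1)*1)/(t+1)^2) t :=
    ((hasDerivAt_id t).sub_const 1).div ((hasDerivAt_id t).add_const 1) ht1
  have h := ((h1.sub_const (Real.log 2)).add hq).sub
    ((((hasDerivAt_const t (Real.log 2)).add h2).sub h1).const_mul (c/2))
  refine h.congr_deriv ?_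
  field_simp
  ring

lemma Fc_one (c : ℝ) : Fc c 1 = 0 := by
  unfold Fc; norm_num

lemma Fd_one (c : ℝ) : Fd c 1 = 0 := by
  unfold Fd; norm_num

/-- second derivative formula sign helper -/
lemma Fdd_eq (s x : ℝ) (hs : 0 < s) (hx : 0 < x) :
    (x+3)/(x+1)^2 - (2*s*(s+3)/(s+1))/2*(1/x - 1/(x+1))
      = (x-s)*(s*x+s+x+3)/((s+1)*x*(x+1)^2) := by
  have h1 : x + 1 ≠ 0 := by linarith
  have h2 : s + 1 ≠ 0 := by linarith
  field_simp
  ring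

/-- Fd is monotone on [s, ∞) for c = c(s). -/
lemma Fd_mono (s : ℝ) (hs : 0 < s) :
    MonotoneOn (Fd (2*s*(s+3)/(s+1))) (Set.Ici s) := by
  set c := 2*s*(s+3)/(s+1) with hc
  apply monotoneOn_of_deriv_nonneg (convex_Ici s)
  · intro x hx
    have hx0 : 0 < x := lt_of_lt_of_le hs hx
    exact (hasDerivAt_Fd c x hx0).continuousAt.continuousWithinAt
  · intro x hx
    rw [interior_Ici] at hx
    have hx0 : 0 < x := lt_trans hs hx
    exact (hasDerivAt_Fd c x hx0).differentiableAt.differentiableWithinAt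
  · intro x hx
    rw [interior_Ici] at hx
    have hx0 : 0 < x := lt_trans hs hx
    have hsx : s < x := hx
    rw [(hasDerivAt_Fd c x hx0).deriv, hc, Fdd_eq s x hs hx0]
    apply div_nonneg
    · nlinarith [mul_pos hs hx0]
    · positivity

/-- Fd is antitone on (0, s] for c = c(s). -/
lemma Fd_anti (s : ℝ) (hs : 0 < s) :
    AntitoneOn (Fd (2*s*(s+3)/(s+1))) (Set.Ioc 0 s) := by
  set c := 2*s*(s+3)/(s+1) with hc
  apply antitoneOn_of_deriv_nonpos (convex_Ioc 0 s)
  · intro x hx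
    exact (hasDerivAt_Fd c x hx.1).continuousAt.continuousWithinAt
  · intro x hx
    rw [interior_Ioc] at hx
    exact (hasDerivAt_Fd c x hx.1).differentiableAt.differentiableWithinAt
  · intro x hx
    rw [interior_Ioc] at hx
    have hx0 : 0 < x := hx.1
    have hxs : x < s := hx.2
    rw [(hasDerivAt_Fd c x hx.1).deriv, hc, Fdd_eq s x hs hx.1]
    apply div_nonpos_of_nonpos_of_nonneg
    · nlinarith [mul_pos hs hx0]
    · positivity

/-- key lower lemma -/
lemma Fc_nonneg (s t : ℝ) (hs : 0 < s) (hs1 : s ≤ 1) (hst : s ≤ t) :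
    0 ≤ Fc (2*s*(s+3)/(s+1)) t := by
  set c := 2*s*(s+3)/(s+1) with hc
  have ht0 : 0 < t := lt_of_lt_of_le hs hst
  have h1s : (1:ℝ) ∈ Set.Ici s := hs1
  rcases le_total t 1 with h | h
  · -- antitone on [s,1], Fc t ≥ Fc 1 = 0
    have hA : AntitoneOn (Fc c) (Set.Icc s 1) := by
      apply antitoneOn_of_deriv_nonpos (convex_Icc s 1)
      · intro x hx
        have hx0 : 0 < x := lt_of_lt_of_le hs hx.1
        exact (hasDerivAt_Fc c x hx0).continuousAt.continuousWithinAt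
      · intro x hx
        rw [interior_Icc] at hx
        have hx0 : 0 < x := lt_trans hs hx.1
        exact (hasDerivAt_Fc c x hx0).differentiableAt.differentiableWithinAt
      · intro x hx
        rw [interior_Icc] at hx
        have hx0 : 0 < x := lt_trans hs hx.1
        rw [(hasDerivAt_Fc c x hx0).deriv]
        have := Fd_mono s hs (le_of_lt hx.1) h1s (le_of_lt hx.2)
        rw [← hc] at this
        rw [Fd_one] at this
        exact this
    have := hA ⟨hst, h⟩ ⟨hs1, le_rfl⟩ h
    rw [Fc_one] at this; exact this
  · -- monotone on [1,t]
    have hM : MonotoneOn (Fc c) (Set.Icc 1 t) := by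
      apply monotoneOn_of_deriv_nonneg (convex_Icc 1 t)
      · intro x hx
        have hx0 : 0 < x := lt_of_lt_of_le one_pos hx.1
        exact (hasDerivAt_Fc c x hx0).continuousAt.continuousWithinAt
      · intro x hx
        rw [interior_Icc] at hx
        have hx0 : 0 < x := lt_trans one_pos hx.1
        exact (hasDerivAt_Fc c x hx0).differentiableAt.differentiableWithinAt
      · intro x hx
        rw [interior_Icc] at hx
        have hx0 : 0 < x := lt_trans one_pos hx.1
        rw [(hasDerivAt_Fc c x hx0).deriv]
        have := Fd_mono s hs h1s (le_trans hs1 (le_of_lt hx.1)) (le_of_lt hx.1)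
        rw [← hc, Fd_one] at this
        exact this
    have := hM ⟨le_rfl, h⟩ ⟨h, le_rfl⟩ h
    rw [Fc_one] at this; exact this

/-- key upper lemma -/
lemma Fc_nonpos (s t : ℝ) (hs1 : 1 ≤ s) (ht0 : 0 < t) (hts : t ≤ s) :
    Fc (2*s*(s+3)/(s+1)) t ≤ 0 := by
  set c := 2*s*(s+3)/(s+1) with hc
  have hs : (0:ℝ) < s := lt_of_lt_of_le one_pos hs1
  have h1s : (1:ℝ) ∈ Set.Ioc (0:ℝ) s := ⟨one_pos, hs1⟩
  rcases le_total t 1 with h | h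
  · -- monotone on [t,1]: Fc t ≤ Fc 1 = 0
    have hM : MonotoneOn (Fc c) (Set.Icc t 1) := by
      apply monotoneOn_of_deriv_nonneg (convex_Icc t 1)
      · intro x hx
        have hx0 : 0 < x := lt_of_lt_of_le ht0 hx.1
        exact (hasDerivAt_Fc c x hx0).continuousAt.continuousWithinAt
      · intro x hx
        rw [interior_Icc] at hx
        have hx0 : 0 < x := lt_trans ht0 hx.1
        exact (hasDerivAt_Fc c x hx0).differentiableAt.differentiableWithinAt
      · intro x hx
        rw [interior_Icc] at hx
        have hx0 : 0 < x := lt_trans ht0 hx.1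
        rw [(hasDerivAt_Fc c x hx0).deriv]
        have := Fd_anti s hs ⟨hx0, le_trans (le_of_lt hx.2) hs1⟩ h1s (le_of_lt hx.2)
        rw [← hc, Fd_one] at this
        exact this
    have := hM ⟨le_rfl, h⟩ ⟨h, le_rfl⟩ h
    rw [Fc_one] at this; exact this
  · -- antitone on [1,t]
    have hA : AntitoneOn (Fc c) (Set.Icc 1 t) := by
      apply antitoneOn_of_deriv_nonpos (convex_Icc 1 t)
      · intro x hx
        have hx0 : 0 < x := lt_of_lt_of_le one_pos hx.1
        exact (hasDerivAt_Fc c x hx0).continuousAt.continuousWithinAt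
      · intro x hx
        rw [interior_Icc] at hx
        have hx0 : 0 < x := lt_trans one_pos hx.1
        exact (hasDerivAt_Fc c x hx0).differentiableAt.differentiableWithinAt
      · intro x hx
        rw [interior_Icc] at hx
        have hx0 : 0 < x := lt_trans one_pos hx.1
        rw [(hasDerivAt_Fc c x hx0).deriv]
        have := Fd_anti s hs h1s ⟨hx0, le_trans (le_of_lt hx.2) hts⟩ (le_of_lt hx.1)
        rw [← hc, Fd_one] at this
        exact this
    have := hA ⟨le_rfl, h⟩ ⟨h, le_rfl⟩ h
    rw [Fc_one] at this; exact this

lemma term_eq (c p q : ℝ) (hp : 0 < p) (hq : 0 < q) :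
    (p - q) * Real.log ((p + q) / (2 * q)) -
      c/2*(p * Real.log (2 * p / (p + q)) + q * Real.log (2 * q / (p + q)))
      = q * Fc c (p/q) := by
  have hpq : p + q ≠ 0 := by positivity
  have hq' : q ≠ 0 := ne_of_gt hq
  have hdiv : (0:ℝ) < p / q := div_pos hp hq
  have l1 : Real.log ((p+q)/(2*q)) = Real.log (p/q+1) - Real.log 2 := by
    rw [show (p+q)/(2*q) = (p/q+1)/2 by
        rw [div_eq_div_iff (by positivity) (by norm_num : (2:ℝ) ≠ 0)]
        field_simp; try ring,
      Real.log_div (by positivity) two_ne_zero]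
  have l2 : Real.log (2*p/(p+q)) = Real.log 2 + Real.log (p/q) - Real.log (p/q+1) := by
    rw [show 2*p/(p+q) = 2*(p/q)/(p/q+1) by
        rw [div_eq_div_iff hpq (by positivity)]
        field_simp; try ring,
      Real.log_div (by positivity) (by positivity),
      Real.log_mul two_ne_zero (ne_of_gt hdiv)]
  have l3 : Real.log (2*q/(p+q)) = Real.log 2 - Real.log (p/q+1) := by
    rw [show 2*q/(p+q) = 2/(p/q+1) by
        rw [div_eq_div_iff hpq (by positivity)]
        field_simp; try ring,
      Real.log_div two_ne_zero (by positivity)]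
  rw [l1, l2, l3]
  unfold Fc
  field_simp

theorem stmt9 (n : ℕ) (p q : Fin n → ℝ)
    (hp : ∀ i, 0 < p i) (hq : ∀ i, 0 < q i)
    (hp1 : ∑ i, p i = 1) (hq1 : ∑ i, q i = 1)
    (r R : ℝ) (hr : 0 < r) (hrR : ∀ i, r ≤ p i / q i ∧ p i / q i ≤ R) :
    (2*r*(r+3)/(r+1)) * (((1:ℝ)/2) * ∑ i, (p i * Real.log (2 * p i / (p i + q i)) + q i * Real.log (2 * q i / (p i + q i)))) ≤ (∑ i, (p i - q i) * Real.log ((p i + q i) / (2 * q i))) ∧ (∑ i, (p i - q i) * Real.log ((p i + q i) / (2 * q i))) ≤ (2*R*(R+3)/(R+1)) * (((1:ℝ)/2) * ∑ i, (p i * Real.log (2 * p i / (p i + q i)) + q i * Real.log (2 * q i / (p i + q i)))) := by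
  have hn : 0 < n := by
    rcases Nat.eq_zero_or_pos n with h | h
    · subst h; simp at hp1
    · exact h
  have : Nonempty (Fin n) := Fin.pos_iff_nonempty.mp hn
  have hr1 : r ≤ 1 := by
    by_contra h
    push_neg at h
    have hlt : ∀ i ∈ Finset.univ, q i < p i := by
      intro i _
      have h1 : 1 < p i / q i := lt_of_lt_of_le h (hrR i).1
      exact (one_lt_div (hq i)).mp h1
    have := Finset.sum_lt_sum_of_nonempty Finset.univ_nonempty hlt
    rw [hp1, hq1] at this
    exact lt_irrefl 1 this
  have hR1 : 1 ≤ R := by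
    by_contra h
    push_neg at h
    have hlt : ∀ i ∈ Finset.univ, p i < q i := by
      intro i _
      have h1 : p i / q i < 1 := lt_of_le_of_lt (hrR i).2 h
      exact (div_lt_one (hq i)).mp h1
    have := Finset.sum_lt_sum_of_nonempty Finset.univ_nonempty hlt
    rw [hp1, hq1] at this
    exact lt_irrefl 1 this
  set D : Fin n → ℝ := fun i => (p i - q i) * Real.log ((p i + q i) / (2 * q i)) with hD
  set I : Fin n → ℝ := fun i =>
    p i * Real.log (2 * p i / (p i + q i)) + q i * Real.log (2 * q i / (p i + q i)) with hI
  constructor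
  · have hterm : ∀ i, 0 ≤ D i - (2*r*(r+3)/(r+1))/2 * I i := by
      intro i
      rw [hD, hI]
      simp only
      rw [term_eq _ _ _ (hp i) (hq i)]
      exact mul_nonneg (hq i).le (Fc_nonneg r (p i / q i) hr hr1 (hrR i).1)
    have hsum := Finset.sum_nonneg (fun i (_ : i ∈ Finset.univ) => hterm i)
    rw [Finset.sum_sub_distrib, ← Finset.mul_sum] at hsum
    have : (2*r*(r+3)/(r+1)) * (((1:ℝ)/2) * ∑ i, I i)
        = (2*r*(r+3)/(r+1))/2 * ∑ i, I i := by ring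
    rw [this]
    linarith
  · have hterm : ∀ i, D i - (2*R*(R+3)/(R+1))/2 * I i ≤ 0 := by
      intro i
      rw [hD, hI]
      simp only
      rw [term_eq _ _ _ (hp i) (hq i)]
      have := Fc_nonpos R (p i / q i) hR1 (div_pos (hp i) (hq i)) (hrR i).2
      exact mul_nonpos_of_nonneg_of_nonpos (hq i).le this
    have hsum := Finset.sum_nonpos (fun i (_ : i ∈ Finset.univ) => hterm i)
    rw [Finset.sum_sub_distrib, ← Finset.mul_sum] at hsum
    have : (2*R*(R+3)/(R+1)) * (((1:ℝ)/2) * ∑ i, I i)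
        = (2*R*(R+3)/(R+1))/2 * ∑ i, I i := by ring
    rw [this]
    linarith
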